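/- On any reflexive, transitive, strongly convergent frame with constant domain D and predicate P : D → W → Prop, the 'confidence' principle holds for the MS-true-belief operator: for every world w, either [tB^MS] holds at all R_B-successors of w, or ¬[tB^MS] holds at all R_B-successors of w. (That is, [B][tB^MS]^x φ ∨ [B]¬[tB^MS]^x φ is valid.) -/
import Mathlib

def RB {W : Type*} (R : W → W → Prop) (w u : W) : Prop := ∀ v, R w v → R v u

theorem tBMS_confidence {W : Type*} [Nonempty W] {D : Type*} [Nonempty D]
    (R : W → W → Prop) (P : D → W → Prop)
    (hrefl : ∀ w, R w w) (htrans : ∀ w v u, R w v → R v u → R w u)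
    (hconv : ∀ w, ∃ u, ∀ v, R w v → R v u) :
    ∀ w : W,
      (∀ v, RB R w v → ∃ a, (∀ u, RB R v u → P a u) ∧ P a v) ∨
      (∀ v, RB R w v → ¬ ∃ a, (∀ u, RB R v u → P a u) ∧ P a v) := by
  intro w
  by_cases h : ∀ v, RB R w v → ∃ a, (∀ u, RB R v u → P a u) ∧ P a v
  · exact Or.inl h
  · right
    push_neg at h
    obtain ⟨v₀, hv₀, hno⟩ := h
    rintro v hv ⟨a, ha, hav⟩
    refine hno a ?_ ?_
    · intro u hu
      apply ha
      intro x hvx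
      have hwx : R w x := htrans _ _ _ (hv w (hrefl w)) hvx
      exact htrans _ _ _ (hv₀ x hwx) (hu v₀ (hrefl v₀))
    · apply ha
      intro x hvx
      exact hv₀ x (htrans _ _ _ (hv w (hrefl w)) hvx)
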